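/- Let G : ℝ → ℝ be an integrable function of bounded variation with total variation ‖G‖_V and L¹ norm ‖G‖₁. Let X be a real random variable, and a, b real numbers with b ≠ 0. Then E[G((X + a)/b)] ≤ ‖G‖_V · sup_x |P(X ≤ x) − Φ(x)| + ‖G‖₁ · |b|, where Φ is the standard normal cdf. -/

import Mathlib

open MeasureTheory

/-- Standard normal cumulative distribution function. -/
noncomputable def stdNormalCDF (x : ℝ) : ℝ :=
  ∫ t in Set.Iic x, Real.exp (-(t ^ 2) / 2) / Real.sqrt (2 * Real.pi)

/-- Kolmogorov distance between the law of `X` and the standard normal distribution. -/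
noncomputable def kolDist {Ω : Type*} [MeasurableSpace Ω] (μ : Measure Ω) (X : Ω → ℝ) : ℝ :=
  ⨆ x : ℝ, |(μ {ω | X ω ≤ x}).toReal - stdNormalCDF x|

open Set Filter Topology Real
open scoped ENNReal

namespace BolthausenAux

noncomputable def stdGauss : Measure ℝ := ProbabilityTheory.gaussianReal 0 1

instance : IsProbabilityMeasure stdGauss := by
  unfold stdGauss; infer_instance

lemma stdGauss_Iic (x : ℝ) : stdGauss (Iic x) = ENNReal.ofReal (stdNormalCDF x) := by
  rw [stdGauss, ProbabilityTheory.gaussianReal_apply_eq_integral 0 one_ne_zero]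
  congr 1
  unfold stdNormalCDF
  refine integral_congr_ae (ae_of_all _ fun t => ?_)
  simp [ProbabilityTheory.gaussianPDFReal, div_eq_inv_mul]

lemma stdNormalCDF_nonneg (x : ℝ) : 0 ≤ stdNormalCDF x :=
  integral_nonneg fun t => by positivity

lemma stdGauss_Iic_toReal (x : ℝ) : (stdGauss (Iic x)).toReal = stdNormalCDF x := by
  rw [stdGauss_Iic, ENNReal.toReal_ofReal (stdNormalCDF_nonneg x)]

lemma stdNormalCDF_le_one (x : ℝ) : stdNormalCDF x ≤ 1 := by
  rw [← stdGauss_Iic_toReal]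
  exact ENNReal.toReal_le_of_le_ofReal one_pos.le (by simpa using prob_le_one)

lemma stdGauss_countable {s : Set ℝ} (hs : s.Countable) : stdGauss s = 0 :=
  ProbabilityTheory.gaussianReal_absolutelyContinuous 0 one_ne_zero (hs.measure_zero volume)

lemma stdGauss_Iio (x : ℝ) : stdGauss (Iio x) = stdGauss (Iic x) := by
  apply le_antisymm (measure_mono Iio_subset_Iic_self)
  calc stdGauss (Iic x) ≤ stdGauss (Iio x ∪ {x}) := by
        rw [Iio_union_right]
      _ ≤ stdGauss (Iio x) + stdGauss {x} := measure_union_le _ _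
      _ = stdGauss (Iio x) := by
        rw [stdGauss_countable (countable_singleton x), add_zero]


section Kol

variable {Ω : Type*} [MeasurableSpace Ω] (μ : Measure Ω) [IsProbabilityMeasure μ]
  (X : Ω → ℝ)

lemma kol_le (s : ℝ) : |(μ {ω | X ω ≤ s}).toReal - stdNormalCDF s| ≤ kolDist μ X := by
  apply le_ciSup (f := fun x : ℝ => |(μ {ω | X ω ≤ x}).toReal - stdNormalCDF x|)
  refine ⟨2, ?_⟩
  rintro y ⟨x, rfl⟩
  have h1 : (μ {ω | X ω ≤ x}).toReal ≤ 1 :=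
    ENNReal.toReal_le_of_le_ofReal one_pos.le (by simpa using prob_le_one)
  have h2 : (0:ℝ) ≤ (μ {ω | X ω ≤ x}).toReal := ENNReal.toReal_nonneg
  have h3 := stdNormalCDF_nonneg x
  have h4 := stdNormalCDF_le_one x
  rw [abs_le]; constructor <;> linarith

lemma kolDist_nonneg : 0 ≤ kolDist μ X :=
  le_trans (abs_nonneg _) (kol_le μ X 0)

/-- monotone approximation of `Iio` by `Iic`s -/
lemma Iio_eq_iUnion (s : ℝ) : Iio s = ⋃ n : ℕ, Iic (s - 1/(n+1)) := by
  ext x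
  simp only [mem_Iio, mem_iUnion, mem_Iic]
  constructor
  · intro hx
    obtain ⟨n, hn⟩ := exists_nat_one_div_lt (show (0:ℝ) < s - x by linarith)
    exact ⟨n, by linarith⟩
  · rintro ⟨n, hn⟩
    have : (0:ℝ) < 1/(n+1) := by positivity
    linarith

lemma tendsto_Iic_Iio (ρ : Measure ℝ) [IsFiniteMeasure ρ] (s : ℝ) :
    Tendsto (fun n : ℕ => (ρ (Iic (s - 1/(n+1)))).toReal) atTop
      (𝓝 ((ρ (Iio s)).toReal)) := by
  have hmono : Monotone fun n : ℕ => Iic (s - 1/(n+1)) := by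
    intro m n hmn
    apply Iic_subset_Iic.2
    have h1 : (1:ℝ)/(n+1) ≤ 1/(m+1) := by
      apply one_div_le_one_div_of_le (by positivity)
      have : (m:ℝ) ≤ n := Nat.cast_le.2 hmn
      linarith
    linarith
  have h := tendsto_measure_iUnion_atTop (μ := ρ) hmono
  rw [← Iio_eq_iUnion] at h
  exact (ENNReal.tendsto_toReal (measure_ne_top ρ _)).comp h

lemma kol_lt (hX : Measurable X) (s : ℝ) :
    |(μ {ω | X ω < s}).toReal - stdNormalCDF s| ≤ kolDist μ X := by
  set ρ : Measure ℝ := Measure.map X μ with hρ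
  have : IsProbabilityMeasure ρ := Measure.isProbabilityMeasure_map hX.aemeasurable
  have hρIic : ∀ c : ℝ, ρ (Iic c) = μ {ω | X ω ≤ c} := fun c => by
    rw [hρ, Measure.map_apply hX measurableSet_Iic]; rfl
  have hρIio : ρ (Iio s) = μ {ω | X ω < s} := by
    rw [hρ, Measure.map_apply hX measurableSet_Iio]; rfl
  have h1 : Tendsto (fun n : ℕ => (μ {ω | X ω ≤ s - 1/(n+1)}).toReal) atTop
      (𝓝 ((μ {ω | X ω < s}).toReal)) := by
    have := tendsto_Iic_Iio ρ s
    rw [hρIio] at this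
    simpa only [hρIic] using this
  have h2 : Tendsto (fun n : ℕ => stdNormalCDF (s - 1/(n+1))) atTop
      (𝓝 (stdNormalCDF s)) := by
    have := tendsto_Iic_Iio stdGauss s
    rw [stdGauss_Iio, stdGauss_Iic_toReal] at this
    simpa only [stdGauss_Iic_toReal] using this
  have h3 : Tendsto
      (fun n : ℕ => |(μ {ω | X ω ≤ s - 1/(n+1)}).toReal - stdNormalCDF (s - 1/(n+1))|)
      atTop (𝓝 (|(μ {ω | X ω < s}).toReal - stdNormalCDF s|)) :=
    (h1.sub h2).abs
  exact le_of_tendsto h3 (Eventually.of_forall fun n => kol_le μ X _)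


end Kol

lemma fubini_Iic (ρ σ : Measure ℝ) [IsFiniteMeasure ρ] [IsFiniteMeasure σ] :
    ∫ x, (σ (Iic x)).toReal ∂ρ = ∫ t, (ρ (Ici t)).toReal ∂σ := by
  have hset : MeasurableSet {p : ℝ × ℝ | p.2 ≤ p.1} :=
    measurableSet_le measurable_snd measurable_fst
  have key : ∫⁻ x, σ (Iic x) ∂ρ = ∫⁻ t, ρ (Ici t) ∂σ := by
    have swap := lintegral_lintegral_swap (μ := ρ) (ν := σ)
      (f := fun x t => {p : ℝ × ℝ | p.2 ≤ p.1}.indicator 1 (x, t))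
      ((measurable_one.indicator hset).aemeasurable)
    calc ∫⁻ x, σ (Iic x) ∂ρ
        = ∫⁻ x, ∫⁻ t, {p : ℝ × ℝ | p.2 ≤ p.1}.indicator 1 (x, t) ∂σ ∂ρ := by
          refine lintegral_congr fun x => ?_
          have : (fun t => ({p : ℝ × ℝ | p.2 ≤ p.1}.indicator 1 (x, t) : ℝ≥0∞))
              = (Iic x).indicator 1 := by
            ext t
            by_cases h : t ≤ x <;>
              simp [Set.indicator_apply, h, mem_Iic, Set.mem_setOf_eq]
          rw [this, lintegral_indicator measurableSet_Iic]
          simp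
      _ = ∫⁻ t, ∫⁻ x, {p : ℝ × ℝ | p.2 ≤ p.1}.indicator 1 (x, t) ∂ρ ∂σ := swap
      _ = ∫⁻ t, ρ (Ici t) ∂σ := by
          refine lintegral_congr fun t => ?_
          have : (fun x => ({p : ℝ × ℝ | p.2 ≤ p.1}.indicator 1 (x, t) : ℝ≥0∞))
              = (Ici t).indicator 1 := by
            ext x
            by_cases h : t ≤ x <;>
              simp [Set.indicator_apply, h, mem_Ici, Set.mem_setOf_eq]
          rw [this, lintegral_indicator measurableSet_Ici]
          simp
  have m1 : Measurable fun x : ℝ => σ (Iic x) :=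
    Monotone.measurable fun a b hab => measure_mono (Iic_subset_Iic.2 hab)
  have m2 : Measurable fun t : ℝ => ρ (Ici t) :=
    Antitone.measurable fun a b hab => measure_mono (Ici_subset_Ici.2 hab)
  rw [integral_toReal m1.aemeasurable (ae_of_all _ fun x => measure_lt_top σ _),
    integral_toReal m2.aemeasurable (ae_of_all _ fun t => measure_lt_top ρ _), key]

lemma fubini_Iio (ρ σ : Measure ℝ) [IsFiniteMeasure ρ] [IsFiniteMeasure σ] :
    ∫ x, (σ (Iio x)).toReal ∂ρ = ∫ t, (ρ (Ioi t)).toReal ∂σ := by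
  have hset : MeasurableSet {p : ℝ × ℝ | p.2 < p.1} :=
    measurableSet_lt measurable_snd measurable_fst
  have key : ∫⁻ x, σ (Iio x) ∂ρ = ∫⁻ t, ρ (Ioi t) ∂σ := by
    have swap := lintegral_lintegral_swap (μ := ρ) (ν := σ)
      (f := fun x t => {p : ℝ × ℝ | p.2 < p.1}.indicator 1 (x, t))
      ((measurable_one.indicator hset).aemeasurable)
    calc ∫⁻ x, σ (Iio x) ∂ρ
        = ∫⁻ x, ∫⁻ t, {p : ℝ × ℝ | p.2 < p.1}.indicator 1 (x, t) ∂σ ∂ρ := by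
          refine lintegral_congr fun x => ?_
          have : (fun t => ({p : ℝ × ℝ | p.2 < p.1}.indicator 1 (x, t) : ℝ≥0∞))
              = (Iio x).indicator 1 := by
            ext t
            by_cases h : t < x <;>
              simp [Set.indicator_apply, h, mem_Iio, Set.mem_setOf_eq]
          rw [this, lintegral_indicator measurableSet_Iio]
          simp
      _ = ∫⁻ t, ∫⁻ x, {p : ℝ × ℝ | p.2 < p.1}.indicator 1 (x, t) ∂ρ ∂σ := swap
      _ = ∫⁻ t, ρ (Ioi t) ∂σ := by
          refine lintegral_congr fun t => ?_
          have : (fun x => ({p : ℝ × ℝ | p.2 < p.1}.indicator 1 (x, t) : ℝ≥0∞))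
              = (Ioi t).indicator 1 := by
            ext x
            by_cases h : t < x <;>
              simp [Set.indicator_apply, h, mem_Ioi, Set.mem_setOf_eq]
          rw [this, lintegral_indicator measurableSet_Ioi]
          simp
  have m1 : Measurable fun x : ℝ => σ (Iio x) :=
    Monotone.measurable fun a b hab => measure_mono (Iio_subset_Iio hab)
  have m2 : Measurable fun t : ℝ => ρ (Ioi t) :=
    Antitone.measurable fun a b hab => measure_mono (Ioi_subset_Ioi hab)
  rw [integral_toReal m1.aemeasurable (ae_of_all _ fun x => measure_lt_top σ _),
    integral_toReal m2.aemeasurable (ae_of_all _ fun t => measure_lt_top ρ _), key]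

lemma integrable_of_bounded {f : ℝ → ℝ} (ρ : Measure ℝ) [IsFiniteMeasure ρ]
    (hm : Measurable f) {C : ℝ} (hC : ∀ x, |f x| ≤ C) : Integrable f ρ :=
  (integrable_const C).mono' hm.aestronglyMeasurable
    (ae_of_all _ fun x => by simpa [Real.norm_eq_abs] using hC x)

lemma prob_toReal_le_one (ρ : Measure ℝ) [IsProbabilityMeasure ρ] (s : Set ℝ) :
    (ρ s).toReal ≤ 1 :=
  ENNReal.toReal_le_of_le_ofReal one_pos.le (by simpa using prob_le_one)

lemma core (ν γ : Measure ℝ) [IsProbabilityMeasure ν] [IsProbabilityMeasure γ]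
    (hγc : ∀ s : Set ℝ, s.Countable → γ s = 0)
    (G : ℝ → ℝ) (hGBV : eVariationOn G Set.univ ≠ ⊤) (K : ℝ) (hK : 0 ≤ K)
    (h1 : ∀ t, (ν (Ici t)).toReal ≤ (γ (Ici t)).toReal + K)
    (h2 : ∀ t, (γ (Ioi t)).toReal ≤ (ν (Ioi t)).toReal + K) :
    ∫ x, G x ∂ν ≤ (∫ x, G x ∂γ) + (eVariationOn G Set.univ).toReal * K := by
  set V : ℝ := (eVariationOn G Set.univ).toReal with hV
  have hlbv : LocallyBoundedVariationOn G Set.univ := fun x y _ _ =>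
    ne_top_of_le_ne_top hGBV (eVariationOn.mono G inter_subset_left)
  set v : ℝ → ℝ := fun x => variationOnFromTo G Set.univ 0 x with hv
  have hvsub : ∀ {x y : ℝ}, x ≤ y → v y - v x = (eVariationOn G (Set.univ ∩ Icc x y)).toReal := by
    intro x y hxy
    have hadd := variationOnFromTo.add (f := G) hlbv (mem_univ 0) (mem_univ x) (mem_univ y)
    have heq := variationOnFromTo.eq_of_le G Set.univ hxy
    simp only [hv]
    linarith
  have hvV : ∀ {x y : ℝ}, x ≤ y → v y - v x ≤ V := by
    intro x y hxy
    rw [hvsub hxy]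
    exact ENNReal.toReal_mono hGBV (eVariationOn.mono G inter_subset_left)
  have hGd : ∀ {x y : ℝ}, x ≤ y → |G y - G x| ≤ v y - v x := by
    intro x y hxy
    rw [hvsub hxy]
    have he : edist (G x) (G y) ≤ eVariationOn G (Set.univ ∩ Icc x y) :=
      eVariationOn.edist_le G ⟨mem_univ x, le_rfl, hxy⟩ ⟨mem_univ y, hxy, le_rfl⟩
    have hfin : eVariationOn G (Set.univ ∩ Icc x y) ≠ ⊤ := hlbv x y (mem_univ x) (mem_univ y)
    calc |G y - G x| = dist (G x) (G y) := by rw [Real.dist_eq, abs_sub_comm]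
      _ = (edist (G x) (G y)).toReal := by rw [edist_dist, ENNReal.toReal_ofReal dist_nonneg]
      _ ≤ _ := ENNReal.toReal_mono hfin he
  set p : ℝ → ℝ := fun x => (v x + G x)/2 with hpdef
  set q : ℝ → ℝ := fun x => (v x - G x)/2 with hqdef
  have hp : Monotone p := by
    intro x y hxy
    have h := hGd hxy
    have h' : G x - G y ≤ |G y - G x| := by rw [abs_sub_comm]; exact le_abs_self _
    simp only [hpdef]
    linarith
  have hq : Monotone q := by
    intro x y hxy
    have h := hGd hxy
    have h' : G y - G x ≤ |G y - G x| := le_abs_self _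
    simp only [hqdef]
    linarith
  have hpq : ∀ x, G x = p x - q x := fun x => by simp only [hpdef, hqdef]; ring
  have hvpq : ∀ x, v x = p x + q x := fun x => by simp only [hpdef, hqdef]; ring
  -- boundedness
  have hv0 : ∀ x, |v x| ≤ V := by
    intro x
    rcases le_total 0 x with h | h
    · rw [abs_of_nonneg (variationOnFromTo.nonneg_of_le G _ h)]
      have := hvsub h
      have hz : v 0 = 0 := variationOnFromTo.self G _ 0
      have := hvV h
      linarith
    · rw [abs_of_nonpos (variationOnFromTo.nonpos_of_ge G _ h)]
      have := hvV h
      have hz : v 0 = 0 := variationOnFromTo.self G _ 0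
      linarith
  have hG0 : ∀ x, |G x| ≤ |G 0| + V := by
    intro x
    have hd : |G x - G 0| ≤ V := by
      rcases le_total 0 x with h | h
      · have h1' := hGd h
        have h2' := hv0 x
        have hz : v 0 = 0 := variationOnFromTo.self G _ 0
        have := le_abs_self (v x)
        linarith
      · have h1' := hGd h
        have h2' := hv0 x
        have hz : v 0 = 0 := variationOnFromTo.self G _ 0
        have := neg_abs_le (v x)
        rw [abs_sub_comm]
        linarith
    have := abs_sub_abs_le_abs_sub (G x) (G 0)
    linarith
  have hVnn : 0 ≤ V := ENNReal.toReal_nonneg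
  set C : ℝ := V + (|G 0| + V) with hC
  have hpb : ∀ x, |p x| ≤ C := by
    intro x
    have : |v x + G x| ≤ C := (abs_add_le _ _).trans (add_le_add (hv0 x) (hG0 x))
    have h2' : |p x| = |v x + G x| / 2 := by
      simp only [hpdef]; rw [abs_div]; norm_num
    rw [h2']
    linarith [abs_nonneg (v x + G x)]
  have hqb : ∀ x, |q x| ≤ C := by
    intro x
    have : |v x - G x| ≤ C := (abs_sub _ _).trans (add_le_add (hv0 x) (hG0 x))
    have h2' : |q x| = |v x - G x| / 2 := by
      simp only [hqdef]; rw [abs_div]; norm_num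
    rw [h2']
    linarith [abs_nonneg (v x - G x)]
  have hpbb : BddBelow (range p) := ⟨-C, by rintro y ⟨x, rfl⟩; linarith [abs_le.1 (hpb x)|>.1]⟩
  have hpba : BddAbove (range p) := ⟨C, by rintro y ⟨x, rfl⟩; linarith [abs_le.1 (hpb x)|>.2]⟩
  have hqbb : BddBelow (range q) := ⟨-C, by rintro y ⟨x, rfl⟩; linarith [abs_le.1 (hqb x)|>.1]⟩
  have hqba : BddAbove (range q) := ⟨C, by rintro y ⟨x, rfl⟩; linarith [abs_le.1 (hqb x)|>.2]⟩
  set cp : ℝ := ⨅ x, p x with hcp_def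
  set up : ℝ := ⨆ x, p x with hup_def
  set cq : ℝ := ⨅ x, q x with hcq_def
  set uq : ℝ := ⨆ x, q x with huq_def
  have hcp : Tendsto p atBot (𝓝 cp) := tendsto_atBot_ciInf hp hpbb
  have hup : Tendsto p atTop (𝓝 up) := tendsto_atTop_ciSup hp hpba
  have hcq : Tendsto q atBot (𝓝 cq) := tendsto_atBot_ciInf hq hqbb
  have huq : Tendsto q atTop (𝓝 uq) := tendsto_atTop_ciSup hq hqba
  have hcp_le : ∀ x, cp ≤ p x := fun x => ciInf_le hpbb x
  have hup_ge : ∀ x, p x ≤ up := fun x => le_ciSup hpba x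
  have hcq_le : ∀ x, cq ≤ q x := fun x => ciInf_le hqbb x
  have huq_ge : ∀ x, q x ≤ uq := fun x => le_ciSup hqba x
  set P := hp.stieltjesFunction with hPdef
  set Q := hq.stieltjesFunction with hQdef
  have hPx : ∀ x, P x = Function.rightLim p x := fun x => hp.stieltjesFunction_eq x
  have hQx : ∀ x, Q x = Function.rightLim q x := fun x => hq.stieltjesFunction_eq x
  have hle_P : ∀ x, p x ≤ P x := fun x => (hPx x) ▸ hp.le_rightLim le_rfl
  have hle_Q : ∀ x, q x ≤ Q x := fun x => (hQx x) ▸ hq.le_rightLim le_rfl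
  have hP_le : ∀ {x y : ℝ}, x < y → P x ≤ p y := fun {x y} h => (hPx x) ▸ hp.rightLim_le h
  have hQ_le : ∀ {x y : ℝ}, x < y → Q x ≤ q y := fun {x y} h => (hQx x) ▸ hq.rightLim_le h
  have hPbot : Tendsto (⇑P) atBot (𝓝 cp) := by
    refine tendsto_of_tendsto_of_tendsto_of_le_of_le hcp
      (hcp.comp (tendsto_atBot_add_const_right _ 1 tendsto_id)) hle_P
      (fun x => hP_le (lt_add_one x))
  have hPtop : Tendsto (⇑P) atTop (𝓝 up) := by
    refine tendsto_of_tendsto_of_tendsto_of_le_of_le hup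
      (hup.comp (tendsto_atTop_add_const_right _ 1 tendsto_id)) hle_P
      (fun x => hP_le (lt_add_one x))
  have hQbot : Tendsto (⇑Q) atBot (𝓝 cq) := by
    refine tendsto_of_tendsto_of_tendsto_of_le_of_le hcq
      (hcq.comp (tendsto_atBot_add_const_right _ 1 tendsto_id)) hle_Q
      (fun x => hQ_le (lt_add_one x))
  have hQtop : Tendsto (⇑Q) atTop (𝓝 uq) := by
    refine tendsto_of_tendsto_of_tendsto_of_le_of_le huq
      (huq.comp (tendsto_atTop_add_const_right _ 1 tendsto_id)) hle_Q
      (fun x => hQ_le (lt_add_one x))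
  haveI hPfin : IsFiniteMeasure P.measure := P.isFiniteMeasure hPbot hPtop
  haveI hQfin : IsFiniteMeasure Q.measure := Q.isFiniteMeasure hQbot hQtop
  set A : ℝ → ℝ := fun x => (P.measure (Iic x)).toReal with hAdef
  set B : ℝ → ℝ := fun x => (Q.measure (Iio x)).toReal with hBdef
  have hA : ∀ x, A x = P x - cp := by
    intro x
    simp only [hAdef]
    rw [P.measure_Iic hPbot, ENNReal.toReal_ofReal (by linarith [hcp_le x, hle_P x])]
  have hseq : ∀ x : ℝ, Tendsto (fun n : ℕ => x - 1/(n+1)) atTop (𝓝 x) := by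
    intro x
    have h0 : Tendsto (fun n : ℕ => 1/((n:ℝ)+1)) atTop (𝓝 0) :=
      tendsto_one_div_add_atTop_nhds_zero_nat
    simpa using tendsto_const_nhds.sub h0
  have hsn_lt : ∀ (x : ℝ) (n : ℕ), x - 1/((n:ℝ)+1) < x := by
    intro x n
    have : (0:ℝ) < 1/((n:ℝ)+1) := by positivity
    linarith
  have hB_le : ∀ x, B x ≤ q x - cq := by
    intro x
    refine le_of_tendsto (tendsto_Iic_Iio Q.measure x) (Eventually.of_forall fun n => ?_)
    rw [Q.measure_Iic hQbot, ENNReal.toReal_ofReal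
      (by linarith [hcq_le (x - 1/(n+1)), hle_Q (x - 1/(n+1))])]
    linarith [hQ_le (hsn_lt x n)]
  have hB_ge : ∀ x, ContinuousAt q x → q x - cq ≤ B x := by
    intro x hc
    have hq' : Tendsto (fun n : ℕ => q (x - 1/(n+1)) - cq) atTop (𝓝 (q x - cq)) :=
      ((hc.tendsto.comp (hseq x)).sub_const cq)
    refine le_of_tendsto_of_tendsto' hq' (tendsto_Iic_Iio Q.measure x) fun n => ?_
    rw [Q.measure_Iic hQbot, ENNReal.toReal_ofReal
      (by linarith [hcq_le (x - 1/(n+1)), hle_Q (x - 1/(n+1))])]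
    linarith [hle_Q (x - 1/(n+1))]
  have hA_cont : ∀ x, ContinuousAt p x → A x = p x - cp := by
    intro x hc
    rw [hA x]
    have : P x = p x := by
      rw [hPx x]
      exact rightLim_eq_of_tendsto
        (hc.tendsto.mono_left nhdsWithin_le_nhds)
    rw [this]
  -- pointwise inequalities
  have hptwise : ∀ x, G x ≤ (cp - cq) + A x - B x := by
    intro x
    rw [hpq x, hA x]
    have := hle_P x
    have := hB_le x
    linarith
  have hae : ∀ᵐ x ∂γ, (cp - cq) + A x - B x ≤ G x := by
    rw [ae_iff]
    refine measure_mono_null (fun x hx => ?_)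
      (hγc _ ((hp.countable_not_continuousAt).union (hq.countable_not_continuousAt)))
    simp only [mem_setOf_eq, not_le] at hx
    rw [mem_union]
    by_contra hmem
    push_neg at hmem
    simp only [mem_setOf_eq, not_not] at hmem
    obtain ⟨hcontp, hcontq⟩ := hmem
    rw [hpq x] at hx
    rw [hA_cont x hcontp] at hx
    linarith [hB_ge x hcontq]
  -- measurability / integrability
  have hGmeas : Measurable G := by
    have : G = fun x => p x - q x := funext hpq
    rw [this]
    exact hp.measurable.sub hq.measurable
  have hGint : ∀ (ρ : Measure ℝ) [IsFiniteMeasure ρ], Integrable G ρ := fun ρ _ =>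
    integrable_of_bounded ρ hGmeas hG0
  have hAmono : Monotone A := fun x y hxy =>
    ENNReal.toReal_mono (measure_ne_top _ _) (measure_mono (Iic_subset_Iic.2 hxy))
  have hBmono : Monotone B := fun x y hxy =>
    ENNReal.toReal_mono (measure_ne_top _ _) (measure_mono (Iio_subset_Iio hxy))
  have hAint : ∀ (ρ : Measure ℝ) [IsFiniteMeasure ρ], Integrable A ρ := fun ρ _ =>
    integrable_of_bounded ρ hAmono.measurable (C := (P.measure univ).toReal) fun x => by
      rw [abs_of_nonneg ENNReal.toReal_nonneg]
      exact ENNReal.toReal_mono (measure_ne_top _ _) (measure_mono (subset_univ _))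
  have hBint : ∀ (ρ : Measure ℝ) [IsFiniteMeasure ρ], Integrable B ρ := fun ρ _ =>
    integrable_of_bounded ρ hBmono.measurable (C := (Q.measure univ).toReal) fun x => by
      rw [abs_of_nonneg ENNReal.toReal_nonneg]
      exact ENNReal.toReal_mono (measure_ne_top _ _) (measure_mono (subset_univ _))
  have hcombint : ∀ (ρ : Measure ℝ) [IsFiniteMeasure ρ],
      Integrable (fun x => (cp - cq) + A x - B x) ρ := fun ρ _ =>
    ((integrable_const (cp - cq)).add (hAint ρ)).sub (hBint ρ)
  have hsplit : ∀ (ρ : Measure ℝ) [IsProbabilityMeasure ρ],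
      ∫ x, ((cp - cq) + A x - B x) ∂ρ = (cp - cq) + ∫ x, A x ∂ρ - ∫ x, B x ∂ρ := by
    intro ρ _
    have hint1 : Integrable (fun x => (cp - cq) + A x) ρ :=
      (integrable_const (cp - cq)).add (hAint ρ)
    rw [integral_sub hint1 (hBint ρ),
      integral_add (integrable_const (cp - cq)) (hAint ρ), integral_const]
    simp
  -- integrability of cdf-type functions
  have hIciInt : ∀ (ρ : Measure ℝ) [IsProbabilityMeasure ρ] (σ : Measure ℝ) [IsFiniteMeasure σ],
      Integrable (fun t => (ρ (Ici t)).toReal) σ := by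
    intro ρ _ σ _
    refine integrable_of_bounded σ (Antitone.measurable fun a b hab =>
      ENNReal.toReal_mono (measure_ne_top _ _) (measure_mono (Ici_subset_Ici.2 hab)))
      (C := 1) fun x => by
        rw [abs_of_nonneg ENNReal.toReal_nonneg]; exact prob_toReal_le_one ρ _
  have hIoiInt : ∀ (ρ : Measure ℝ) [IsProbabilityMeasure ρ] (σ : Measure ℝ) [IsFiniteMeasure σ],
      Integrable (fun t => (ρ (Ioi t)).toReal) σ := by
    intro ρ _ σ _
    refine integrable_of_bounded σ (Antitone.measurable fun a b hab =>
      ENNReal.toReal_mono (measure_ne_top _ _) (measure_mono (Ioi_subset_Ioi hab)))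
      (C := 1) fun x => by
        rw [abs_of_nonneg ENNReal.toReal_nonneg]; exact prob_toReal_le_one ρ _
  set mP : ℝ := (P.measure univ).toReal with hmPdef
  set mQ : ℝ := (Q.measure univ).toReal with hmQdef
  -- comparison of integrals
  have hcompA : ∫ x, A x ∂ν ≤ ∫ x, A x ∂γ + K * mP := by
    rw [fubini_Iic ν P.measure, fubini_Iic γ P.measure]
    have hmono : ∫ t, (ν (Ici t)).toReal ∂P.measure
        ≤ ∫ t, ((γ (Ici t)).toReal + K) ∂P.measure :=
      integral_mono (hIciInt ν P.measure) ((hIciInt γ P.measure).add (integrable_const K)) h1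
    rw [integral_add (hIciInt γ P.measure) (integrable_const K), integral_const] at hmono
    simpa [smul_eq_mul, mul_comm, Measure.real, hmPdef] using hmono
  have hcompB : ∫ x, B x ∂γ ≤ ∫ x, B x ∂ν + K * mQ := by
    rw [fubini_Iio ν Q.measure, fubini_Iio γ Q.measure]
    have hmono : ∫ t, (γ (Ioi t)).toReal ∂Q.measure
        ≤ ∫ t, ((ν (Ioi t)).toReal + K) ∂Q.measure :=
      integral_mono (hIoiInt γ Q.measure) ((hIoiInt ν Q.measure).add (integrable_const K)) h2
    rw [integral_add (hIoiInt ν Q.measure) (integrable_const K), integral_const] at hmono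
    simpa [smul_eq_mul, mul_comm, Measure.real, hmQdef] using hmono
  -- total masses
  have hcpup : cp ≤ up := (hcp_le 0).trans (hup_ge 0)
  have hcquq : cq ≤ uq := (hcq_le 0).trans (huq_ge 0)
  have hmP : mP = up - cp := by
    simp only [hmPdef]
    rw [P.measure_univ hPbot hPtop, ENNReal.toReal_ofReal (by linarith)]
  have hmQ : mQ = uq - cq := by
    simp only [hmQdef]
    rw [Q.measure_univ hQbot hQtop, ENNReal.toReal_ofReal (by linarith)]
  have hmass : mP + mQ ≤ V := by
    have hvtop : Tendsto v atTop (𝓝 (up + uq)) := by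
      have := hup.add huq
      have he : (fun x => p x + q x) = v := funext fun x => (hvpq x).symm
      rwa [he] at this
    have hvbot : Tendsto v atBot (𝓝 (cp + cq)) := by
      have := hcp.add hcq
      have he : (fun x => p x + q x) = v := funext fun x => (hvpq x).symm
      rwa [he] at this
    have hstep : ∀ x, up + uq ≤ v x + V := by
      intro x
      refine le_of_tendsto hvtop ?_
      filter_upwards [eventually_ge_atTop x] with y hy
      linarith [hvV hy]
    have : up + uq - V ≤ cp + cq := by
      refine ge_of_tendsto hvbot (Eventually.of_forall fun x => ?_)
      linarith [hstep x]
    linarith [hmP, hmQ]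
  -- main chain
  have step1 : ∫ x, G x ∂ν ≤ (cp - cq) + ∫ x, A x ∂ν - ∫ x, B x ∂ν := by
    calc ∫ x, G x ∂ν ≤ ∫ x, ((cp - cq) + A x - B x) ∂ν :=
          integral_mono (hGint ν) (hcombint ν) hptwise
      _ = _ := hsplit ν
  have step7 : (cp - cq) + ∫ x, A x ∂γ - ∫ x, B x ∂γ ≤ ∫ x, G x ∂γ := by
    calc (cp - cq) + ∫ x, A x ∂γ - ∫ x, B x ∂γ = ∫ x, ((cp - cq) + A x - B x) ∂γ :=
          (hsplit γ).symm
      _ ≤ ∫ x, G x ∂γ := integral_mono_ae (hcombint γ) (hGint γ) hae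
  have hKmass : K * (mP + mQ) ≤ K * V := mul_le_mul_of_nonneg_left hmass hK
  have : V * K = K * V := mul_comm _ _
  linarith [step1, step7, hcompA, hcompB, hKmass]

lemma toReal_compl {Ω : Type*} [MeasurableSpace Ω] (ρ : Measure Ω) [IsProbabilityMeasure ρ]
    {s : Set Ω} (hs : MeasurableSet s) : (ρ sᶜ).toReal = 1 - (ρ s).toReal := by
  rw [prob_compl_eq_one_sub hs, ENNReal.toReal_sub_of_le prob_le_one ENNReal.one_ne_top,
    ENNReal.toReal_one]

lemma stdGauss_Ici_toReal (s : ℝ) : (stdGauss (Ici s)).toReal = 1 - stdNormalCDF s := by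
  rw [show Ici s = (Iio s)ᶜ by simp, toReal_compl _ measurableSet_Iio, stdGauss_Iio,
    stdGauss_Iic_toReal]

lemma stdGauss_Ioi_toReal (s : ℝ) : (stdGauss (Ioi s)).toReal = 1 - stdNormalCDF s := by
  rw [show Ioi s = (Iic s)ᶜ by simp, toReal_compl _ measurableSet_Iic, stdGauss_Iic_toReal]

lemma stdGauss_Iio_toReal (s : ℝ) : (stdGauss (Iio s)).toReal = stdNormalCDF s := by
  rw [stdGauss_Iio, stdGauss_Iic_toReal]

/-- measurability of BV functions -/
lemma bv_measurable {G : ℝ → ℝ} (hGBV : eVariationOn G Set.univ ≠ ⊤) : Measurable G := by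
  have hlbv : LocallyBoundedVariationOn G Set.univ := fun x y _ _ =>
    ne_top_of_le_ne_top hGBV (eVariationOn.mono G inter_subset_left)
  obtain ⟨p, q, hp, hq, hpq⟩ := hlbv.exists_monotoneOn_sub_monotoneOn
  rw [hpq]
  exact ((monotoneOn_univ.1 hp).measurable).sub ((monotoneOn_univ.1 hq).measurable)

/-- The Gaussian-term bound. -/
lemma gauss_term_bound {G : ℝ → ℝ} (hGmeas : Measurable G) (hGint : Integrable G volume)
    (a b : ℝ) (hb : b ≠ 0) :
    ∫ z, G ((z + a) / b) ∂stdGauss ≤ (∫ x : ℝ, |G x|) * |b| := by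
  have hmeasℓ : Measurable fun z : ℝ => (z + a) / b := (measurable_id.add_const a).div_const b
  have habs : Integrable (fun z => |G ((z + a) / b)|) volume := by
    have h1 : Integrable (fun x => |G x|) volume := hGint.abs
    have h2 : Integrable (fun x => |G (x / b)|) volume := h1.comp_div hb
    simpa using h2.comp_add_right a
  have hmabs : Measurable fun z => |G ((z + a) / b)| := (hGmeas.comp hmeasℓ).abs
  have key : ∫ z, |G ((z + a) / b)| ∂stdGauss ≤ ∫ z, |G ((z + a) / b)| ∂volume := by
    rw [integral_eq_lintegral_of_nonneg_ae (ae_of_all _ fun z => abs_nonneg _)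
      hmabs.aestronglyMeasurable,
      integral_eq_lintegral_of_nonneg_ae (ae_of_all _ fun z => abs_nonneg _)
      hmabs.aestronglyMeasurable]
    apply ENNReal.toReal_mono
    · rw [← ofReal_integral_eq_lintegral_ofReal habs (ae_of_all _ fun z => abs_nonneg _)]
      exact ENNReal.ofReal_ne_top
    · rw [stdGauss, ProbabilityTheory.gaussianReal_of_var_ne_zero 0 one_ne_zero,
        lintegral_withDensity_eq_lintegral_mul _ (ProbabilityTheory.measurable_gaussianPDF 0 1)
          (hmabs.ennreal_ofReal)]
      refine lintegral_mono fun z => ?_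
      have hpdf : ProbabilityTheory.gaussianPDF 0 1 z ≤ 1 := by
        rw [ProbabilityTheory.gaussianPDF]
        refine ENNReal.ofReal_le_of_le_toReal ?_
        rw [ENNReal.toReal_one]
        unfold ProbabilityTheory.gaussianPDFReal
        simp only [NNReal.coe_one]
        have h2π : (1:ℝ) ≤ Real.sqrt (2 * π * 1) := by
          rw [show (2:ℝ) * π * 1 = 2 * π by ring]
          refine Real.one_le_sqrt.2 ?_
          nlinarith [Real.pi_gt_three]
        have hexp : Real.exp (-(z - 0) ^ 2 / (2 * 1)) ≤ 1 := by
          rw [Real.exp_le_one_iff]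
          nlinarith [sq_nonneg (z - 0)]
        have hinv : (Real.sqrt (2 * π * 1))⁻¹ ≤ 1 := by
          rw [inv_le_one_iff₀]; right; exact h2π
        nlinarith [Real.exp_pos (-(z - 0) ^ 2 / (2 * 1)), inv_nonneg.2 (Real.sqrt_nonneg (2 * π * 1))]
      calc (ProbabilityTheory.gaussianPDF 0 1 * fun z => ENNReal.ofReal |G ((z + a) / b)|) z
          = ProbabilityTheory.gaussianPDF 0 1 z * ENNReal.ofReal |G ((z + a) / b)| := rfl
        _ ≤ 1 * ENNReal.ofReal |G ((z + a) / b)| := by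
            exact mul_le_mul_left hpdf _
        _ = ENNReal.ofReal |G ((z + a) / b)| := one_mul _
  have hchange : ∫ z, |G ((z + a) / b)| ∂volume = |b| * ∫ x : ℝ, |G x| := by
    have h1 : ∫ z : ℝ, |G ((z + a) / b)| = ∫ z : ℝ, |G (z / b)| := by
      exact integral_add_right_eq_self (fun z : ℝ => |G (z / b)|) a
    rw [h1, Measure.integral_comp_div (fun x => |G x|) b, smul_eq_mul]
  calc ∫ z, G ((z + a) / b) ∂stdGauss ≤ |∫ z, G ((z + a) / b) ∂stdGauss| := le_abs_self _
    _ ≤ ∫ z, |G ((z + a) / b)| ∂stdGauss := by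
        simpa [Real.norm_eq_abs] using
          norm_integral_le_integral_norm (μ := stdGauss) (f := fun z => G ((z + a) / b))
    _ ≤ ∫ z, |G ((z + a) / b)| ∂volume := key
    _ = (∫ x : ℝ, |G x|) * |b| := by rw [hchange, mul_comm]


end BolthausenAux

open BolthausenAux

/-- Bolthausen's Lemma 2: for an integrable function `G` of bounded variation,
`E[G((X+a)/b)] ≤ ‖G‖_V ⋅ K(X) + ‖G‖₁ ⋅ |b|`. -/
theorem bolthausen_bv_lemma {Ω : Type*} [MeasurableSpace Ω] (μ : Measure Ω)
    [IsProbabilityMeasure μ] (G : ℝ → ℝ) (hGint : Integrable G volume)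
    (hGBV : eVariationOn G Set.univ ≠ ⊤)
    (X : Ω → ℝ) (hX : Measurable X) (a b : ℝ) (hb : b ≠ 0) :
    (∫ ω, G ((X ω + a) / b) ∂μ) ≤
      (eVariationOn G Set.univ).toReal * kolDist μ X + (∫ x : ℝ, |G x|) * |b| := by
  have hGmeas : Measurable G := bv_measurable hGBV
  set K : ℝ := kolDist μ X with hK
  have hKnn : 0 ≤ K := kolDist_nonneg μ X
  set Y : Ω → ℝ := fun ω => (X ω + a) / b with hY
  have hYmeas : Measurable Y := (hX.add_const a).div_const b
  set ℓ : ℝ → ℝ := fun z => (z + a) / b with hℓ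
  have hℓmeas : Measurable ℓ := (measurable_id.add_const a).div_const b
  have hℓinj : Function.Injective ℓ := by
    intro z w h
    simp only [hℓ] at h
    field_simp at h
    linarith
  set ν : Measure ℝ := Measure.map Y μ with hν
  set γ : Measure ℝ := Measure.map ℓ stdGauss with hγ
  haveI : IsProbabilityMeasure ν := Measure.isProbabilityMeasure_map hYmeas.aemeasurable
  haveI : IsProbabilityMeasure γ := Measure.isProbabilityMeasure_map hℓmeas.aemeasurable
  have hγc : ∀ s : Set ℝ, s.Countable → γ s = 0 := by
    intro s hs
    rw [hγ, Measure.map_apply hℓmeas hs.measurableSet]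
    exact stdGauss_countable (hs.preimage hℓinj)
  -- case analysis data
  rcases hb.lt_or_gt with hbneg | hbpos
  · -- b < 0
    have h1 : ∀ t, (ν (Ici t)).toReal ≤ (γ (Ici t)).toReal + K := by
      intro t
      set s : ℝ := b * t - a with hs
      have hν' : ν (Ici t) = μ {ω | X ω ≤ s} := by
        rw [hν, Measure.map_apply hYmeas measurableSet_Ici]
        congr 1
        ext ω
        simp only [mem_preimage, mem_Ici, hY, mem_setOf_eq, le_div_iff_of_neg hbneg, hs]
        constructor <;> intro <;> linarith
      have hγ' : γ (Ici t) = stdGauss (Iic s) := by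
        rw [hγ, Measure.map_apply hℓmeas measurableSet_Ici]
        congr 1
        ext z
        simp only [mem_preimage, mem_Ici, hℓ, mem_Iic, le_div_iff_of_neg hbneg, hs]
        constructor <;> intro <;> linarith
      rw [hν', hγ', stdGauss_Iic_toReal]
      have := abs_le.1 (kol_le μ X s)
      linarith [this.2]
    have h2 : ∀ t, (γ (Ioi t)).toReal ≤ (ν (Ioi t)).toReal + K := by
      intro t
      set s : ℝ := b * t - a with hs
      have hν' : ν (Ioi t) = μ {ω | X ω < s} := by
        rw [hν, Measure.map_apply hYmeas measurableSet_Ioi]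
        congr 1
        ext ω
        simp only [mem_preimage, mem_Ioi, hY, mem_setOf_eq, lt_div_iff_of_neg hbneg, hs]
        constructor <;> intro <;> linarith
      have hγ' : γ (Ioi t) = stdGauss (Iio s) := by
        rw [hγ, Measure.map_apply hℓmeas measurableSet_Ioi]
        congr 1
        ext z
        simp only [mem_preimage, mem_Ioi, hℓ, mem_Iio, lt_div_iff_of_neg hbneg, hs]
        constructor <;> intro <;> linarith
      rw [hν', hγ', stdGauss_Iio_toReal]
      have := abs_le.1 (kol_lt μ X hX s)
      linarith [this.1]
    have hcore := core ν γ hγc G hGBV K hKnn h1 h2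
    have hLHS : ∫ ω, G (Y ω) ∂μ = ∫ x, G x ∂ν := by
      rw [hν, integral_map hYmeas.aemeasurable hGmeas.aestronglyMeasurable]
    have hRHS : ∫ x, G x ∂γ = ∫ z, G (ℓ z) ∂stdGauss := by
      rw [hγ, integral_map hℓmeas.aemeasurable hGmeas.aestronglyMeasurable]
    have hgauss : ∫ z, G (ℓ z) ∂stdGauss ≤ (∫ x : ℝ, |G x|) * |b| :=
      gauss_term_bound hGmeas hGint a b hb
    calc ∫ ω, G ((X ω + a) / b) ∂μ = ∫ x, G x ∂ν := hLHS
      _ ≤ (∫ x, G x ∂γ) + (eVariationOn G Set.univ).toReal * K := hcore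
      _ ≤ (∫ x : ℝ, |G x|) * |b| + (eVariationOn G Set.univ).toReal * K := by
          rw [hRHS]; linarith [hgauss]
      _ = (eVariationOn G Set.univ).toReal * kolDist μ X + (∫ x : ℝ, |G x|) * |b| := by
          rw [hK]; ring
  · -- 0 < b
    have h1 : ∀ t, (ν (Ici t)).toReal ≤ (γ (Ici t)).toReal + K := by
      intro t
      set s : ℝ := b * t - a with hs
      have hν' : ν (Ici t) = μ ({ω | X ω < s}ᶜ) := by
        rw [hν, Measure.map_apply hYmeas measurableSet_Ici]
        congr 1
        ext ω
        simp only [mem_preimage, mem_Ici, hY, mem_compl_iff, mem_setOf_eq, not_lt,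
          le_div_iff₀ hbpos, hs]
        constructor <;> intro <;> linarith
      have hγ' : γ (Ici t) = stdGauss (Ici s) := by
        rw [hγ, Measure.map_apply hℓmeas measurableSet_Ici]
        congr 1
        ext z
        simp only [mem_preimage, mem_Ici, hℓ, le_div_iff₀ hbpos, hs]
        constructor <;> intro <;> linarith
      rw [hν', hγ', stdGauss_Ici_toReal, toReal_compl μ (s := {ω | X ω < s}) (hX measurableSet_Iio)]
      have := abs_le.1 (kol_lt μ X hX s)
      linarith [this.1]
    have h2 : ∀ t, (γ (Ioi t)).toReal ≤ (ν (Ioi t)).toReal + K := by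
      intro t
      set s : ℝ := b * t - a with hs
      have hν' : ν (Ioi t) = μ ({ω | X ω ≤ s}ᶜ) := by
        rw [hν, Measure.map_apply hYmeas measurableSet_Ioi]
        congr 1
        ext ω
        simp only [mem_preimage, mem_Ioi, hY, mem_compl_iff, mem_setOf_eq, not_le,
          lt_div_iff₀ hbpos, hs]
        constructor <;> intro <;> linarith
      have hγ' : γ (Ioi t) = stdGauss (Ioi s) := by
        rw [hγ, Measure.map_apply hℓmeas measurableSet_Ioi]
        congr 1
        ext z
        simp only [mem_preimage, mem_Ioi, hℓ, lt_div_iff₀ hbpos, hs]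
        constructor <;> intro <;> linarith
      rw [hν', hγ', stdGauss_Ioi_toReal, toReal_compl μ (s := {ω | X ω ≤ s}) (hX measurableSet_Iic)]
      have := abs_le.1 (kol_le μ X s)
      linarith [this.2]
    have hcore := core ν γ hγc G hGBV K hKnn h1 h2
    have hLHS : ∫ ω, G (Y ω) ∂μ = ∫ x, G x ∂ν := by
      rw [hν, integral_map hYmeas.aemeasurable hGmeas.aestronglyMeasurable]
    have hRHS : ∫ x, G x ∂γ = ∫ z, G (ℓ z) ∂stdGauss := by
      rw [hγ, integral_map hℓmeas.aemeasurable hGmeas.aestronglyMeasurable]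
    have hgauss : ∫ z, G (ℓ z) ∂stdGauss ≤ (∫ x : ℝ, |G x|) * |b| :=
      gauss_term_bound hGmeas hGint a b hb
    calc ∫ ω, G ((X ω + a) / b) ∂μ = ∫ x, G x ∂ν := hLHS
      _ ≤ (∫ x, G x ∂γ) + (eVariationOn G Set.univ).toReal * K := hcore
      _ ≤ (∫ x : ℝ, |G x|) * |b| + (eVariationOn G Set.univ).toReal * K := by
          rw [hRHS]; linarith [hgauss]
      _ = (eVariationOn G Set.univ).toReal * kolDist μ X + (∫ x : ℝ, |G x|) * |b| := by
          rw [hK]; ring
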